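/- Linear convergence barrier for polynomial approximation of the absolute value: there exists a constant c > 0 such that for every n ≥ 1 and every polynomial p of degree at most n with real coefficients, sup_{x ∈ [−1,1]} | |x| − p(x) | ≥ c/n; that is, polynomial approximation to f(x) = |x| on [−1,1] achieves at best linear convergence O(1/n). -/
import Mathlib


open Real intervalIntegral Finset

namespace AbsLB

/-- Fejér-type nonnegative kernel. -/
noncomputable def Fej (r : ℕ) (θ : ℝ) : ℝ :=
    (∑ j ∈ Finset.range r, (-1: ℝ)^j * Real.cos ((2*j : ℝ)*θ))^2
  + (∑ j ∈ Finset.range r, (-1: ℝ)^j * Real.sin ((2*j : ℝ)*θ))^2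

noncomputable def Ker (L r : ℕ) (θ : ℝ) : ℝ :=
  (-1 : ℝ)^(L+1) * Real.cos ((2*L : ℝ)*θ) * Fej r θ

lemma contFej (r : ℕ) : Continuous (Fej r) := by
  unfold Fej; fun_prop

lemma contKer (L r : ℕ) : Continuous (Ker L r) := by
  unfold Ker; have := contFej r; fun_prop

lemma fejNonneg (r : ℕ) (θ : ℝ) : 0 ≤ Fej r θ := by
  unfold Fej; positivity

lemma kerAbsLe (L r : ℕ) (θ : ℝ) : |Ker L r θ| ≤ Fej r θ := by
  unfold Ker
  rw [abs_mul, abs_mul, abs_pow, abs_neg, abs_one, one_pow, one_mul,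
    abs_of_nonneg (fejNonneg r θ)]
  have h1 := Real.abs_cos_le_one ((2*L:ℝ)*θ)
  nlinarith [fejNonneg r θ, abs_nonneg (Real.cos ((2*L:ℝ)*θ))]

lemma fejExpand (r : ℕ) (θ : ℝ) :
    Fej r θ = ∑ j ∈ Finset.range r, ∑ i ∈ Finset.range r,
      (-1 : ℝ)^(j+i) * Real.cos (((2*j : ℝ) - 2*i)*θ) := by
  unfold Fej
  rw [sq, sq, Finset.sum_mul_sum, Finset.sum_mul_sum, ← Finset.sum_add_distrib]
  refine Finset.sum_congr rfl fun j _ => ?_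
  rw [← Finset.sum_add_distrib]
  refine Finset.sum_congr rfl fun i _ => ?_
  have : ((2*j : ℝ) - 2*i)*θ = (2*j:ℝ)*θ - (2*i:ℝ)*θ := by ring
  rw [this, Real.cos_sub, pow_add]
  ring

/-- integral of cos(c θ). -/
lemma intCos (c : ℝ) (hc : c ≠ 0) (a b : ℝ) :
    ∫ θ in a..b, Real.cos (c*θ) = (Real.sin (c*b) - Real.sin (c*a))/c := by
  rw [intervalIntegral.integral_comp_mul_left (fun x => Real.cos x) hc]
  simp [integral_cos, div_eq_inv_mul]

lemma intCosPi (k : ℤ) (hk : k ≠ 0) :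
    ∫ θ in (0:ℝ)..π, Real.cos ((k : ℝ)*θ) = 0 := by
  rw [intCos (k:ℝ) (by exact_mod_cast hk)]
  simp [Real.sin_int_mul_pi]

lemma cosmul (a b θ : ℝ) :
    Real.cos (a*θ) * Real.cos (b*θ) = (Real.cos ((a+b)*θ) + Real.cos ((a-b)*θ))/2 := by
  have h1 : (a+b)*θ = a*θ + b*θ := by ring
  have h2 : (a-b)*θ = a*θ - b*θ := by ring
  rw [h1, h2, Real.cos_add, Real.cos_sub]
  ring

lemma orth2 (a b : ℤ) (h1 : a+b ≠ 0) (h2 : a-b ≠ 0) :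
    ∫ θ in (0:ℝ)..π, Real.cos ((a:ℝ)*θ) * Real.cos ((b:ℝ)*θ) = 0 := by
  have : ∀ θ : ℝ, Real.cos ((a:ℝ)*θ) * Real.cos ((b:ℝ)*θ)
      = (Real.cos ((((a+b):ℤ):ℝ)*θ) + Real.cos ((((a-b):ℤ):ℝ)*θ))/2 := by
    intro θ; rw [cosmul]; push_cast; ring_nf
  simp only [this]
  rw [intervalIntegral.integral_div, intervalIntegral.integral_add
    ((by fun_prop : Continuous fun θ:ℝ => Real.cos ((((a+b):ℤ):ℝ)*θ)).intervalIntegrable _ _)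
    ((by fun_prop : Continuous fun θ:ℝ => Real.cos ((((a-b):ℤ):ℝ)*θ)).intervalIntegrable _ _),
    intCosPi _ h1, intCosPi _ h2]
  norm_num

lemma orth3 (a b c : ℤ) (h1 : a+b+c ≠ 0) (h2 : a+b-c ≠ 0) (h3 : a-b+c ≠ 0) (h4 : a-b-c ≠ 0) :
    ∫ θ in (0:ℝ)..π,
      Real.cos ((a:ℝ)*θ) * Real.cos ((b:ℝ)*θ) * Real.cos ((c:ℝ)*θ) = 0 := by
  have : ∀ θ : ℝ, Real.cos ((a:ℝ)*θ) * Real.cos ((b:ℝ)*θ) * Real.cos ((c:ℝ)*θ)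
      = (Real.cos ((((a+b):ℤ):ℝ)*θ) * Real.cos ((c:ℝ)*θ)
       + Real.cos ((((a-b):ℤ):ℝ)*θ) * Real.cos ((c:ℝ)*θ))/2 := by
    intro θ
    rw [cosmul]
    push_cast
    ring_nf
  simp only [this]
  rw [intervalIntegral.integral_div, intervalIntegral.integral_add
    ((by fun_prop : Continuous fun θ:ℝ => Real.cos ((((a+b):ℤ):ℝ)*θ) * Real.cos ((c:ℝ)*θ)).intervalIntegrable _ _)
    ((by fun_prop : Continuous fun θ:ℝ => Real.cos ((((a-b):ℤ):ℝ)*θ) * Real.cos ((c:ℝ)*θ)).intervalIntegrable _ _),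
    orth2 _ _ h1 h2, orth2 _ _ h3 h4]
  norm_num

lemma vanish (n L r : ℕ) (hfreq : n + 2*r ≤ 2*L + 1) (hr : 1 ≤ r) :
    ∀ (k : ℕ) (m : ℤ), m.natAbs + k ≤ n →
      ∫ θ in (0:ℝ)..π, (Real.cos θ)^k * Real.cos ((m:ℝ)*θ) * Ker L r θ = 0 := by
  have contK := contKer L r
  intro k
  induction k with
  | zero =>
    intro m hm
    have expand : ∀ θ : ℝ, (Real.cos θ)^0 * Real.cos ((m:ℝ)*θ) * Ker L r θ
        = ∑ j ∈ Finset.range r, ∑ i ∈ Finset.range r,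
            ((-1 : ℝ)^(L+1) * (-1 : ℝ)^(j+i)) *
            (Real.cos ((m:ℝ)*θ) * Real.cos (((2*(L:ℤ) : ℤ):ℝ)*θ)
              * Real.cos (((2*(j:ℤ) - 2*(i:ℤ) : ℤ):ℝ)*θ)) := by
      intro θ
      simp only [pow_zero, one_mul, Ker, fejExpand, Finset.mul_sum, Finset.sum_mul]
      refine Finset.sum_congr rfl fun j _ => Finset.sum_congr rfl fun i _ => ?_
      push_cast
      ring
    simp only [expand]
    rw [intervalIntegral.integral_finset_sum (fun j _ =>
      (continuous_finset_sum _ fun i _ => by fun_prop).intervalIntegrable _ _)]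
    refine Finset.sum_eq_zero fun j hj => ?_
    rw [intervalIntegral.integral_finset_sum (fun i _ =>
      ((by fun_prop : Continuous fun θ:ℝ => ((-1 : ℝ)^(L+1) * (-1 : ℝ)^(j+i)) *
            (Real.cos ((m:ℝ)*θ) * Real.cos (((2*(L:ℤ) : ℤ):ℝ)*θ)
              * Real.cos (((2*(j:ℤ) - 2*(i:ℤ) : ℤ):ℝ)*θ)))).intervalIntegrable _ _)]
    refine Finset.sum_eq_zero fun i hi => ?_
    rw [intervalIntegral.integral_const_mul]
    have hj' := Finset.mem_range.mp hj
    have hi' := Finset.mem_range.mp hi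
    rw [orth3 m (2*(L:ℤ)) (2*(j:ℤ) - 2*(i:ℤ)) (by omega) (by omega) (by omega) (by omega),
      mul_zero]
  | succ k ih =>
    intro m hm
    have key : ∀ θ : ℝ, (Real.cos θ)^(k+1) * Real.cos ((m:ℝ)*θ) * Ker L r θ
        = ((Real.cos θ)^k * Real.cos (((m+1 : ℤ):ℝ)*θ) * Ker L r θ)/2
        + ((Real.cos θ)^k * Real.cos (((m-1 : ℤ):ℝ)*θ) * Ker L r θ)/2 := by
      intro θ
      have h1 : Real.cos ((1:ℝ)*θ) * Real.cos ((m:ℝ)*θ)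
          = (Real.cos ((1+(m:ℝ))*θ) + Real.cos ((1-(m:ℝ))*θ))/2 := cosmul 1 (m:ℝ) θ
      have h2 : Real.cos ((1-(m:ℝ))*θ) = Real.cos (((m-1:ℤ):ℝ)*θ) := by
        rw [show ((1:ℝ)-(m:ℝ))*θ = -((((m-1:ℤ)):ℝ)*θ) by push_cast; ring, Real.cos_neg]
      have h3 : Real.cos ((1+(m:ℝ))*θ) = Real.cos (((m+1:ℤ):ℝ)*θ) := by
        norm_num; ring_nf
      rw [pow_succ]
      have h4 : Real.cos θ = Real.cos ((1:ℝ)*θ) := by rw [one_mul]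
      calc (Real.cos θ)^k * Real.cos θ * Real.cos ((m:ℝ)*θ) * Ker L r θ
          = (Real.cos θ)^k * (Real.cos ((1:ℝ)*θ) * Real.cos ((m:ℝ)*θ)) * Ker L r θ := by
            rw [← h4]; ring
        _ = _ := by rw [h1, h2, h3]; ring
    simp only [key]
    rw [intervalIntegral.integral_add
      (((by fun_prop : Continuous fun θ:ℝ => ((Real.cos θ)^k * Real.cos (((m+1 : ℤ):ℝ)*θ) * Ker L r θ)/2)).intervalIntegrable _ _)
      (((by fun_prop : Continuous fun θ:ℝ => ((Real.cos θ)^k * Real.cos (((m-1 : ℤ):ℝ)*θ) * Ker L r θ)/2)).intervalIntegrable _ _),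
      intervalIntegral.integral_div, intervalIntegral.integral_div,
      ih (m+1) (by omega), ih (m-1) (by omega)]
    norm_num


lemma sinOdd1 (g : ℤ) : Real.sin (((2*g+1 : ℤ):ℝ)*(π/2)) = (-1:ℝ)^g := by
  have : (((2*g+1 : ℤ):ℝ))*(π/2) = π/2 + (g:ℤ)*π := by push_cast; ring
  rw [this, Real.sin_add_int_mul_pi, Real.sin_pi_div_two, mul_one]

lemma sinOdd2 (g : ℤ) : Real.sin (((2*g-1 : ℤ):ℝ)*(π/2)) = -(-1:ℝ)^g := by
  have : (((2*g-1 : ℤ):ℝ))*(π/2) = -(π/2) + (g:ℤ)*π := by push_cast; ring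
  rw [this, Real.sin_add_int_mul_pi, Real.sin_neg, Real.sin_pi_div_two]
  ring

lemma absCosInt (g : ℤ) (hg : 1 ≤ g) :
    ∫ θ in (0:ℝ)..π, |Real.cos θ| * Real.cos (((2*g : ℤ):ℝ)*θ)
      = 2 * (-1:ℝ)^(g+1) / (4*(g:ℝ)^2 - 1) := by
  have h1 : ((2*g+1 : ℤ):ℝ) ≠ 0 := by exact_mod_cast (by omega : (2*g+1 : ℤ) ≠ 0)
  have h2 : ((2*g-1 : ℤ):ℝ) ≠ 0 := by exact_mod_cast (by omega : (2*g-1 : ℤ) ≠ 0)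
  have contInt : IntervalIntegrable (fun θ : ℝ => |Real.cos θ| * Real.cos (((2*g : ℤ):ℝ)*θ))
      MeasureTheory.volume 0 (π/2) := (by fun_prop : Continuous fun θ : ℝ =>
        |Real.cos θ| * Real.cos (((2*g : ℤ):ℝ)*θ)).intervalIntegrable _ _
  have contInt2 : IntervalIntegrable (fun θ : ℝ => |Real.cos θ| * Real.cos (((2*g : ℤ):ℝ)*θ))
      MeasureTheory.volume (π/2) π := (by fun_prop : Continuous fun θ : ℝ =>
        |Real.cos θ| * Real.cos (((2*g : ℤ):ℝ)*θ)).intervalIntegrable _ _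
  rw [← intervalIntegral.integral_add_adjacent_intervals contInt contInt2]
  have pi2 : (0:ℝ) ≤ π/2 := by positivity
  have e1 : ∫ θ in (0:ℝ)..(π/2), |Real.cos θ| * Real.cos (((2*g : ℤ):ℝ)*θ)
      = (Real.sin (((2*g+1:ℤ):ℝ)*(π/2)))/((2*g+1:ℤ):ℝ)/2
        + (Real.sin (((2*g-1:ℤ):ℝ)*(π/2)))/((2*g-1:ℤ):ℝ)/2 := by
    rw [intervalIntegral.integral_congr (g := fun θ =>
        (Real.cos (((2*g+1:ℤ):ℝ)*θ) + Real.cos (((2*g-1:ℤ):ℝ)*θ))/2) ?_]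
    · rw [intervalIntegral.integral_div, intervalIntegral.integral_add
        ((by fun_prop : Continuous fun θ:ℝ => Real.cos (((2*g+1:ℤ):ℝ)*θ)).intervalIntegrable _ _)
        ((by fun_prop : Continuous fun θ:ℝ => Real.cos (((2*g-1:ℤ):ℝ)*θ)).intervalIntegrable _ _),
        intCos _ h1, intCos _ h2]
      simp only [mul_zero, Real.sin_zero, sub_zero]
      ring
    · intro θ hθ
      rw [Set.uIcc_of_le pi2] at hθ
      have hc : 0 ≤ Real.cos θ := Real.cos_nonneg_of_mem_Icc
        ⟨by linarith [hθ.1, Real.pi_pos], hθ.2⟩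
      simp only
      rw [abs_of_nonneg hc]
      have h := cosmul (2*(g:ℝ)) 1 θ
      simp only [one_mul] at h
      push_cast
      linear_combination h
  have e2 : ∫ θ in (π/2:ℝ)..π, |Real.cos θ| * Real.cos (((2*g : ℤ):ℝ)*θ)
      = (Real.sin (((2*g+1:ℤ):ℝ)*(π/2)))/((2*g+1:ℤ):ℝ)/2
        + (Real.sin (((2*g-1:ℤ):ℝ)*(π/2)))/((2*g-1:ℤ):ℝ)/2 := by
    rw [intervalIntegral.integral_congr (g := fun θ =>
        -((Real.cos (((2*g+1:ℤ):ℝ)*θ) + Real.cos (((2*g-1:ℤ):ℝ)*θ))/2)) ?_]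
    · rw [intervalIntegral.integral_neg, intervalIntegral.integral_div,
        intervalIntegral.integral_add
        ((by fun_prop : Continuous fun θ:ℝ => Real.cos (((2*g+1:ℤ):ℝ)*θ)).intervalIntegrable _ _)
        ((by fun_prop : Continuous fun θ:ℝ => Real.cos (((2*g-1:ℤ):ℝ)*θ)).intervalIntegrable _ _),
        intCos _ h1, intCos _ h2]
      have s1 : Real.sin (((2*g+1:ℤ):ℝ)*π) = 0 := by
        exact_mod_cast Real.sin_int_mul_pi (2*g+1)
      have s2 : Real.sin (((2*g-1:ℤ):ℝ)*π) = 0 := by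
        exact_mod_cast Real.sin_int_mul_pi (2*g-1)
      rw [s1, s2]
      ring
    · intro θ hθ
      have hple : (π/2:ℝ) ≤ π := by linarith [Real.pi_pos]
      rw [Set.uIcc_of_le hple] at hθ
      have hc : Real.cos θ ≤ 0 := Real.cos_nonpos_of_pi_div_two_le_of_le hθ.1
        (by linarith [hθ.2, Real.pi_pos])
      simp only
      rw [abs_of_nonpos hc]
      have h := cosmul (2*(g:ℝ)) 1 θ
      simp only [one_mul] at h
      push_cast
      linear_combination -h
  rw [e1, e2, sinOdd1, sinOdd2]
  have hg2 : (4*(g:ℝ)^2 - 1) ≠ 0 := by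
    have : ((2*g+1 : ℤ):ℝ) * ((2*g-1:ℤ):ℝ) = 4*(g:ℝ)^2 - 1 := by push_cast; ring
    rw [← this]; exact mul_ne_zero h1 h2
  have hzp : (-1:ℝ)^(g+1) = -(-1:ℝ)^g := by
    rw [zpow_add₀ (by norm_num : (-1:ℝ) ≠ 0), zpow_one]; ring
  rw [hzp, show (4*(g:ℝ)^2 - 1) = ((2*g+1 : ℤ):ℝ) * ((2*g-1:ℤ):ℝ) from by push_cast; ring]
  have hgr : (1:ℝ) ≤ (g:ℝ) := by exact_mod_cast hg
  have hA : 2*(g:ℝ)+1 ≠ 0 := by intro h; linarith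
  have hB : 2*(g:ℝ)-1 ≠ 0 := by intro h; linarith
  push_cast
  field_simp [hA, hB]
  ring

lemma signCancel (L j i : ℕ) (e : ℤ) (he : e = (L:ℤ)+j-i ∨ e = (L:ℤ)-j+i) :
    ((-1:ℝ)^(L+1) * (-1:ℝ)^(j+i)) * (-1:ℝ)^(e+1) = 1 := by
  rw [← zpow_natCast (-1:ℝ) (L+1), ← zpow_natCast (-1:ℝ) (j+i),
    ← zpow_add₀ (by norm_num : (-1:ℝ) ≠ 0), ← zpow_add₀ (by norm_num : (-1:ℝ) ≠ 0)]
  rcases he with h | h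
  · rw [show ((L+1 : ℕ) : ℤ) + ((j+i : ℕ) : ℤ) + (e+1) = 2*((L:ℤ)+j+1) by
      rw [h]; push_cast; ring, zpow_mul]
    norm_num
  · rw [show ((L+1 : ℕ) : ℤ) + ((j+i : ℕ) : ℤ) + (e+1) = 2*((L:ℤ)+i+1) by
      rw [h]; push_cast; ring, zpow_mul]
    norm_num

lemma valKer (L r : ℕ) (hrL : r ≤ L) (hr : 1 ≤ r) :
    ∫ θ in (0:ℝ)..π, |Real.cos θ| * Ker L r θ
      = ∑ j ∈ Finset.range r, ∑ i ∈ Finset.range r,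
          (1/(4*(((L:ℤ)+j-i : ℤ):ℝ)^2 - 1) + 1/(4*(((L:ℤ)-j+i : ℤ):ℝ)^2 - 1)) := by
  have expand : ∀ θ : ℝ, |Real.cos θ| * Ker L r θ
      = ∑ j ∈ Finset.range r, ∑ i ∈ Finset.range r,
          ((-1 : ℝ)^(L+1) * (-1 : ℝ)^(j+i)) *
          ((|Real.cos θ| * Real.cos (((2*((L:ℤ)+j-i) : ℤ):ℝ)*θ))/2
           + (|Real.cos θ| * Real.cos (((2*((L:ℤ)-j+i) : ℤ):ℝ)*θ))/2) := by
    intro θ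
    simp only [Ker, fejExpand, Finset.mul_sum, Finset.sum_mul]
    refine Finset.sum_congr rfl fun j _ => Finset.sum_congr rfl fun i _ => ?_
    have h := cosmul ((2*L : ℝ)) ((2*j : ℝ) - 2*i) θ
    rw [show (2*(L:ℝ) + (2*(j:ℝ) - 2*(i:ℝ))) = 2*((L:ℝ)+(j:ℝ)-(i:ℝ)) by ring,
      show (2*(L:ℝ) - (2*(j:ℝ) - 2*(i:ℝ))) = 2*((L:ℝ)-(j:ℝ)+(i:ℝ)) by ring] at h
    push_cast
    linear_combination (|Real.cos θ| * ((-1 : ℝ)^(L+1) * (-1 : ℝ)^(j+i))) * h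
  simp only [expand]
  rw [intervalIntegral.integral_finset_sum (fun j _ =>
      (continuous_finset_sum _ fun i _ => by fun_prop).intervalIntegrable _ _)]
  refine Finset.sum_congr rfl fun j hj => ?_
  rw [intervalIntegral.integral_finset_sum (fun i _ =>
      ((by fun_prop : Continuous fun θ : ℝ =>
        ((-1 : ℝ)^(L+1) * (-1 : ℝ)^(j+i)) *
          ((|Real.cos θ| * Real.cos (((2*((L:ℤ)+j-i) : ℤ):ℝ)*θ))/2
           + (|Real.cos θ| * Real.cos (((2*((L:ℤ)-j+i) : ℤ):ℝ)*θ))/2)).intervalIntegrable _ _))]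
  refine Finset.sum_congr rfl fun i hi => ?_
  have hj' := Finset.mem_range.mp hj
  have hi' := Finset.mem_range.mp hi
  have hg1 : (1:ℤ) ≤ (L:ℤ)+j-i := by omega
  have hg2 : (1:ℤ) ≤ (L:ℤ)-j+i := by omega
  rw [intervalIntegral.integral_const_mul, intervalIntegral.integral_add
      (((by fun_prop : Continuous fun θ:ℝ =>
        (|Real.cos θ| * Real.cos (((2*((L:ℤ)+j-i) : ℤ):ℝ)*θ))/2)).intervalIntegrable _ _)
      (((by fun_prop : Continuous fun θ:ℝ =>
        (|Real.cos θ| * Real.cos (((2*((L:ℤ)-j+i) : ℤ):ℝ)*θ))/2)).intervalIntegrable _ _),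
    intervalIntegral.integral_div, intervalIntegral.integral_div,
    absCosInt _ hg1, absCosInt _ hg2]
  have s1 := signCancel L j i ((L:ℤ)+j-i) (Or.inl rfl)
  have s2 := signCancel L j i ((L:ℤ)-j+i) (Or.inr rfl)
  linear_combination (1/(4*((((L:ℤ)+j-i : ℤ)):ℝ)^2 - 1)) * s1
    + (1/(4*((((L:ℤ)-j+i : ℤ)):ℝ)^2 - 1)) * s2
set_option maxHeartbeats 1000000 in
lemma massFej (r : ℕ) : ∫ θ in (0:ℝ)..π, Fej r θ = π * r := by
  simp only [fejExpand]
  rw [intervalIntegral.integral_finset_sum (fun j _ =>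
      (continuous_finset_sum _ fun i _ => by fun_prop).intervalIntegrable _ _)]
  have inner : ∀ j ∈ Finset.range r,
      (∫ θ in (0:ℝ)..π, ∑ i ∈ Finset.range r,
        (-1 : ℝ)^(j+i) * Real.cos (((2*j : ℝ) - 2*i)*θ)) = π := by
    intro j hj
    rw [intervalIntegral.integral_finset_sum (fun i _ =>
      ((by fun_prop : Continuous fun θ:ℝ =>
        (-1 : ℝ)^(j+i) * Real.cos (((2*j : ℝ) - 2*i)*θ))).intervalIntegrable _ _)]
    have term : ∀ i ∈ Finset.range r,
        (∫ θ in (0:ℝ)..π, (-1 : ℝ)^(j+i) * Real.cos (((2*j : ℝ) - 2*i)*θ))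
          = if i = j then π else 0 := by
      intro i _
      rw [intervalIntegral.integral_const_mul]
      by_cases h : i = j
      · subst h
        simp only [sub_self, zero_mul, Real.cos_zero, intervalIntegral.integral_const,
          smul_eq_mul, mul_one, sub_zero, if_pos]
        rw [← two_mul, pow_mul]
        norm_num
      · have hfr : ((2*(j:ℤ) - 2*i : ℤ):ℝ) = (2*j : ℝ) - 2*i := by push_cast; ring
        rw [show (fun θ:ℝ => Real.cos (((2*j : ℝ) - 2*i)*θ))
            = fun θ:ℝ => Real.cos (((2*(j:ℤ) - 2*i : ℤ):ℝ)*θ) by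
          funext θ; rw [hfr], intCosPi _ (by omega), mul_zero, if_neg h]
    rw [Finset.sum_congr rfl term, Finset.sum_ite_eq' (Finset.range r) j (fun _ => π),
      if_pos hj]
  rw [Finset.sum_congr rfl inner, Finset.sum_const, Finset.card_range, nsmul_eq_mul]
  ring


end AbsLB


/-- Linear convergence barrier for polynomial approximation of the absolute value: there is a
constant `c > 0` such that for every `n ≥ 1` and every real polynomial `p` of degree at most `n`,
`sup_{x ∈ [−1,1]} ||x| − p(x)| ≥ c/n`; polynomial approximation to `|x|` on `[−1,1]` achieves at
best linear convergence. -/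
theorem polynomial_approximation_abs_lower_bound :
    ∃ c : ℝ, 0 < c ∧ ∀ n : ℕ, 1 ≤ n → ∀ p : Polynomial ℝ, p.natDegree ≤ n →
      ∃ x ∈ Set.Icc (-1 : ℝ) 1, c / n ≤ |(|x| - Polynomial.eval x p)| := by
  classical
  refine ⟨1/128, by norm_num, ?_⟩
  intro n hn p hp
  by_contra hcon
  push_neg at hcon
  set L : ℕ := n with hL
  set r : ℕ := (n+1)/2 with hrdef
  have hr1 : 1 ≤ r := by omega
  have hrL : r ≤ L := by omega
  have hfreq : n + 2*r ≤ 2*L + 1 := by omega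
  have hn0 : (0:ℝ) < n := by exact_mod_cast hn
  have hpc : Continuous fun x : ℝ => Polynomial.eval x p := p.continuous
  have contK := AbsLB.contKer L r
  have contF := AbsLB.contFej r
  -- annihilation of the polynomial part
  have hP : ∫ θ in (0:ℝ)..π, (Polynomial.eval (Real.cos θ) p) * AbsLB.Ker L r θ = 0 := by
    have expand : ∀ θ : ℝ, (Polynomial.eval (Real.cos θ) p) * AbsLB.Ker L r θ
        = ∑ i ∈ Finset.range (n+1),
            (p.coeff i) * ((Real.cos θ)^i * Real.cos (((0:ℤ):ℝ)*θ) * AbsLB.Ker L r θ) := by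
      intro θ
      rw [Polynomial.eval_eq_sum_range' (by omega : p.natDegree < n+1), Finset.sum_mul]
      refine Finset.sum_congr rfl fun i _ => ?_
      simp only [Int.cast_zero, zero_mul, Real.cos_zero, mul_one]
      ring
    simp only [expand]
    rw [intervalIntegral.integral_finset_sum (fun i _ =>
      ((by fun_prop : Continuous fun θ : ℝ =>
        (p.coeff i) * ((Real.cos θ)^i * Real.cos (((0:ℤ):ℝ)*θ) * AbsLB.Ker L r θ)).intervalIntegrable _ _))]
    refine Finset.sum_eq_zero fun i hi => ?_
    rw [intervalIntegral.integral_const_mul,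
      AbsLB.vanish n L r hfreq hr1 i 0 (by
      have := Finset.mem_range.mp hi
      simp only [Int.natAbs_zero, zero_add]; omega), mul_zero]
  -- value of the functional on |x|
  have hV := AbsLB.valKer L r hrL hr1
  -- lower bound for the value
  have hVlow : (r:ℝ) * ((r:ℝ) * (1/(8*(n:ℝ)^2)))
      ≤ ∫ θ in (0:ℝ)..π, |Real.cos θ| * AbsLB.Ker L r θ := by
    rw [hV]
    calc (r:ℝ) * ((r:ℝ) * (1/(8*(n:ℝ)^2)))
        = ∑ _j ∈ Finset.range r, ∑ _i ∈ Finset.range r, (1/(8*(n:ℝ)^2)) := by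
          rw [Finset.sum_const, Finset.sum_const, Finset.card_range, nsmul_eq_mul,
            nsmul_eq_mul]
      _ ≤ _ := by
          refine Finset.sum_le_sum fun j hj => Finset.sum_le_sum fun i hi => ?_
          have hj' := Finset.mem_range.mp hj
          have hi' := Finset.mem_range.mp hi
          have ha1 : (1:ℤ) ≤ (L:ℤ)+j-i := by omega
          have ha2 : (L:ℤ)+j-i ≤ 2*n := by omega
          have hb1 : (1:ℤ) ≤ (L:ℤ)-j+i := by omega
          have hb2 : (L:ℤ)-j+i ≤ 2*n := by omega
          have ha1' : (1:ℝ) ≤ (((L:ℤ)+j-i : ℤ):ℝ) := by exact_mod_cast ha1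
          have ha2' : (((L:ℤ)+j-i : ℤ):ℝ) ≤ 2*(n:ℝ) := by exact_mod_cast ha2
          have hb1' : (1:ℝ) ≤ (((L:ℤ)-j+i : ℤ):ℝ) := by exact_mod_cast hb1
          have hb2' : (((L:ℤ)-j+i : ℤ):ℝ) ≤ 2*(n:ℝ) := by exact_mod_cast hb2
          have c1 : 1/(16*(n:ℝ)^2) ≤ 1/(4*(((L:ℤ)+j-i : ℤ):ℝ)^2 - 1) := by
            apply one_div_le_one_div_of_le
            · nlinarith
            · nlinarith
          have c2 : 1/(16*(n:ℝ)^2) ≤ 1/(4*(((L:ℤ)-j+i : ℤ):ℝ)^2 - 1) := by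
            apply one_div_le_one_div_of_le
            · nlinarith
            · nlinarith
          have : 1/(8*(n:ℝ)^2) = 1/(16*(n:ℝ)^2) + 1/(16*(n:ℝ)^2) := by
            field_simp
            ring
          rw [this]
          exact add_le_add c1 c2
  -- upper bound for the value using the smallness assumption
  have hub : (∫ θ in (0:ℝ)..π, |Real.cos θ| * AbsLB.Ker L r θ)
      ≤ (1/128/(n:ℝ)) * (π * r) := by
    have hsub : (∫ θ in (0:ℝ)..π, |Real.cos θ| * AbsLB.Ker L r θ)
        = ∫ θ in (0:ℝ)..π, (|Real.cos θ| - Polynomial.eval (Real.cos θ) p) * AbsLB.Ker L r θ := by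
      rw [show (fun θ : ℝ => (|Real.cos θ| - Polynomial.eval (Real.cos θ) p) * AbsLB.Ker L r θ)
          = fun θ : ℝ => |Real.cos θ| * AbsLB.Ker L r θ
            - (Polynomial.eval (Real.cos θ) p) * AbsLB.Ker L r θ by funext θ; ring,
        intervalIntegral.integral_sub
          ((by fun_prop : Continuous fun θ : ℝ =>
            |Real.cos θ| * AbsLB.Ker L r θ).intervalIntegrable _ _)
          ((by fun_prop : Continuous fun θ : ℝ =>
            (Polynomial.eval (Real.cos θ) p) * AbsLB.Ker L r θ).intervalIntegrable _ _),
        hP, sub_zero]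
    rw [hsub]
    have step1 : (∫ θ in (0:ℝ)..π,
          (|Real.cos θ| - Polynomial.eval (Real.cos θ) p) * AbsLB.Ker L r θ)
        ≤ |∫ θ in (0:ℝ)..π,
          (|Real.cos θ| - Polynomial.eval (Real.cos θ) p) * AbsLB.Ker L r θ| := le_abs_self _
    have step2 : |∫ θ in (0:ℝ)..π,
          (|Real.cos θ| - Polynomial.eval (Real.cos θ) p) * AbsLB.Ker L r θ|
        ≤ ∫ θ in (0:ℝ)..π,
          |(|Real.cos θ| - Polynomial.eval (Real.cos θ) p) * AbsLB.Ker L r θ| :=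
      intervalIntegral.abs_integral_le_integral_abs (le_of_lt Real.pi_pos)
    have step3 : (∫ θ in (0:ℝ)..π,
          |(|Real.cos θ| - Polynomial.eval (Real.cos θ) p) * AbsLB.Ker L r θ|)
        ≤ ∫ θ in (0:ℝ)..π, (1/128/(n:ℝ)) * AbsLB.Fej r θ := by
      apply intervalIntegral.integral_mono_on (le_of_lt Real.pi_pos)
      · exact ((by fun_prop : Continuous fun θ : ℝ =>
          |(|Real.cos θ| - Polynomial.eval (Real.cos θ) p) * AbsLB.Ker L r θ|).intervalIntegrable _ _)
      · exact ((by fun_prop : Continuous fun θ : ℝ =>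
          (1/128/(n:ℝ)) * AbsLB.Fej r θ).intervalIntegrable _ _)
      · intro θ hθ
        rw [abs_mul]
        have hx : Real.cos θ ∈ Set.Icc (-1:ℝ) 1 := ⟨Real.neg_one_le_cos θ, Real.cos_le_one θ⟩
        have herr : |(|Real.cos θ| - Polynomial.eval (Real.cos θ) p)| ≤ 1/128/(n:ℝ) :=
          le_of_lt (hcon (Real.cos θ) hx)
        have hker : |AbsLB.Ker L r θ| ≤ AbsLB.Fej r θ := AbsLB.kerAbsLe L r θ
        exact mul_le_mul herr hker (abs_nonneg _) (by positivity)
    have step4 : (∫ θ in (0:ℝ)..π, (1/128/(n:ℝ)) * AbsLB.Fej r θ)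
        = (1/128/(n:ℝ)) * (π * r) := by
      rw [intervalIntegral.integral_const_mul, AbsLB.massFej]
    calc _ ≤ _ := step1
      _ ≤ _ := step2
      _ ≤ _ := step3
      _ = _ := step4
  -- contradiction
  have hπ : π ≤ 4 := le_of_lt (lt_of_lt_of_le Real.pi_lt_d2 (by norm_num))
  have hr0 : (0:ℝ) < r := by exact_mod_cast hr1
  have hnr : (n:ℝ) ≤ 2*(r:ℝ) := by exact_mod_cast (by omega : n ≤ 2*r)
  have key : (r:ℝ) * ((r:ℝ) * (1/(8*(n:ℝ)^2))) ≤ (1/128/(n:ℝ)) * (4 * r) := by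
    refine le_trans (le_trans hVlow hub) ?_
    have : (1/128/(n:ℝ)) * (π * r) ≤ (1/128/(n:ℝ)) * (4 * r) := by
      apply mul_le_mul_of_nonneg_left _ (by positivity)
      apply mul_le_mul_of_nonneg_right hπ (by positivity)
    exact this
  have key2 : (r:ℝ) * (r:ℝ) * 128 * (n:ℝ) ≤ 4 * (r:ℝ) * (8 * (n:ℝ)^2) := by
    have h8 : (0:ℝ) < 8*(n:ℝ)^2 := by positivity
    have h128 : (0:ℝ) < 128*(n:ℝ) := by positivity
    rw [div_div] at key
    rw [show (r:ℝ) * ((r:ℝ) * (1/(8*(n:ℝ)^2))) = (r:ℝ)*(r:ℝ)/(8*(n:ℝ)^2) by ring,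
      show (1/(128*(n:ℝ))) * (4*r) = 4*(r:ℝ)/(128*(n:ℝ)) by ring,
      div_le_div_iff₀ h8 h128] at key
    linarith
  nlinarith [key2, mul_le_mul_of_nonneg_left hnr (by positivity : (0:ℝ) ≤ 32*(n:ℝ)*(r:ℝ)),
    mul_pos (mul_pos hn0 hr0) hr0]
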